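/- arXiv:1111.2871 — 2 statements merged into one kernel-verified Lean document; each statement's English description precedes it below -/
import Mathlib

section
/- The Moyal star product satisfies the Leibniz rule: ∂_i(f ⋆ g) = (∂_i f) ⋆ g + f ⋆ (∂_i g) for all coordinate directions i and Schwartz functions f, g. -/
open MeasureTheory SchwartzMap Matrix

/-- The Moyal star product on functions on `ℝⁿ`, defined by
`(f ⋆ g)(u) = (πℏ)⁻ⁿ ∫∫ f(u+v) g(u+w) e^{(2i/ℏ) v·Θ⁻¹·w} dv dw`. -/
noncomputable def moyal (n : ℕ) (hbar : ℝ) (Θinv : Matrix (Fin n) (Fin n) ℝ)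
    (f g : (Fin n → ℝ) → ℂ) : (Fin n → ℝ) → ℂ := fun u =>
  (((Real.pi * hbar) ^ n : ℝ) : ℂ)⁻¹ *
    ∫ v : Fin n → ℝ, ∫ w : Fin n → ℝ,
      f (u + v) * g (u + w) *
        Complex.exp ((2 * Complex.I / (hbar : ℂ)) *
          ((∑ i, ∑ j, v i * Θinv i j * w j : ℝ) : ℂ))

section MoyalLeibnizAux

open Metric

variable {n : ℕ} {F : Type*} [NormedAddCommGroup F] [NormedSpace ℝ F]

private lemma integrable_jbracket (n : ℕ) :
    Integrable (fun v : Fin n → ℝ => (((1 : ℝ) + ‖v‖) ^ (n + 1))⁻¹) := by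
  have h : Integrable (fun v : Fin n → ℝ => ((1 : ℝ) + ‖v‖) ^ (-((n : ℝ) + 1))) := by
    apply integrable_one_add_norm
    rw [Module.finrank_fin_fun]
    norm_num
  refine h.congr (Filter.Eventually.of_forall fun v => ?_)
  have h1 : (0:ℝ) < 1 + ‖v‖ := by positivity
  dsimp only
  rw [show (-((n : ℝ) + 1)) = -((n+1 : ℕ) : ℝ) by push_cast; ring, Real.rpow_neg h1.le,
    Real.rpow_natCast]

private lemma schwartz_decay_bound (h : 𝓢((Fin n → ℝ), F)) (u : Fin n → ℝ) :
    ∃ C : ℝ, 0 ≤ C ∧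
      ∀ x ∈ ball u 1, ∀ v : Fin n → ℝ, ‖h (x + v)‖ ≤ C * (((1 : ℝ) + ‖v‖) ^ (n + 1))⁻¹ := by
  set M : ℝ := 2 ^ (n+1) *
    (Finset.Iic ((n+1 : ℕ), (0:ℕ))).sup (fun m => SchwartzMap.seminorm ℝ m.1 m.2) h with hM_def
  have hM : ∀ z, (1 + ‖z‖) ^ (n+1) * ‖h z‖ ≤ M := by
    intro z
    have := h.one_add_le_sup_seminorm_apply (𝕜 := ℝ) (m := ((n+1 : ℕ), (0:ℕ))) (k := n+1)
      (n := 0) le_rfl le_rfl z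
    simpa [norm_iteratedFDeriv_zero] using this
  have hM0 : 0 ≤ M := le_trans (by positivity) (hM 0)
  refine ⟨M * (2 + ‖u‖) ^ (n+1), by positivity, fun x hx v => ?_⟩
  have hx1 : ‖x - u‖ < 1 := mem_ball_iff_norm.mp hx
  have hxu : ‖x‖ ≤ ‖u‖ + 1 := by
    have := norm_sub_norm_le x u
    linarith
  have hkey : (1 : ℝ) + ‖v‖ ≤ (2 + ‖u‖) * (1 + ‖x + v‖) := by
    have h1 : ‖v‖ ≤ ‖x + v‖ + ‖x‖ := by
      have := norm_add_le (x + v) (-x)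
      simpa using this
    have h2 : (0:ℝ) ≤ ‖x + v‖ := norm_nonneg _
    have h3 : (0:ℝ) ≤ ‖u‖ := norm_nonneg _
    nlinarith
  have hpos : (0:ℝ) < ((1 : ℝ) + ‖v‖) ^ (n+1) := by positivity
  rw [← div_eq_mul_inv, le_div_iff₀ hpos]
  calc ‖h (x + v)‖ * (1 + ‖v‖) ^ (n+1)
      ≤ ‖h (x + v)‖ * ((2 + ‖u‖) * (1 + ‖x + v‖)) ^ (n+1) := by
        gcongr
    _ = (2 + ‖u‖) ^ (n+1) * ((1 + ‖x + v‖) ^ (n+1) * ‖h (x + v)‖) := by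
        rw [mul_pow]; ring
    _ ≤ (2 + ‖u‖) ^ (n+1) * M := by
        gcongr
        exact hM (x + v)
    _ = M * (2 + ‖u‖) ^ (n+1) := mul_comm _ _

private lemma integrable_kernel (f g : 𝓢((Fin n → ℝ), ℂ))
    (e : (Fin n → ℝ) × (Fin n → ℝ) → ℂ)
    (he_cont : Continuous e) (he : ∀ p, ‖e p‖ ≤ 1) (x : Fin n → ℝ) :
    Integrable (fun p : (Fin n → ℝ) × (Fin n → ℝ) => f (x + p.1) * g (x + p.2) * e p) := by
  have h1 : Integrable (fun v : Fin n → ℝ => f (x + v)) := f.integrable.comp_add_left x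
  have h2 : Integrable (fun w : Fin n → ℝ => g (x + w)) := g.integrable.comp_add_left x
  have h12 : Integrable (fun p : (Fin n → ℝ) × (Fin n → ℝ) => f (x + p.1) * g (x + p.2)) := by
    rw [MeasureTheory.Measure.volume_eq_prod]
    exact h1.mul_prod h2
  have hcont : Continuous (fun p : (Fin n → ℝ) × (Fin n → ℝ) =>
      f (x + p.1) * g (x + p.2) * e p) := by
    apply Continuous.mul _ he_cont
    exact (f.continuous.comp (continuous_const.add continuous_fst)).mul
      (g.continuous.comp (continuous_const.add continuous_snd))
  refine h12.norm.mono' hcont.aestronglyMeasurable (Filter.Eventually.of_forall fun p => ?_)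
  rw [norm_mul]
  exact mul_le_of_le_one_right (norm_nonneg _) (he p)

private lemma moyal_key (f g : 𝓢((Fin n → ℝ), ℂ)) (e : (Fin n → ℝ) × (Fin n → ℝ) → ℂ)
    (he_cont : Continuous e) (he : ∀ p, ‖e p‖ = 1) (u : Fin n → ℝ) :
    HasFDerivAt (fun x => ∫ p : (Fin n → ℝ) × (Fin n → ℝ), f (x + p.1) * g (x + p.2) * e p)
      (∫ p : (Fin n → ℝ) × (Fin n → ℝ),
        e p • (f (u + p.1) • fderiv ℝ (⇑g) (u + p.2) + g (u + p.2) • fderiv ℝ (⇑f) (u + p.1))) u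
    ∧ Integrable (fun p : (Fin n → ℝ) × (Fin n → ℝ) =>
        e p • (f (u + p.1) • fderiv ℝ (⇑g) (u + p.2) +
          g (u + p.2) • fderiv ℝ (⇑f) (u + p.1))) := by
  set F' : (Fin n → ℝ) → (Fin n → ℝ) × (Fin n → ℝ) → (Fin n → ℝ) →L[ℝ] ℂ := fun x p =>
    e p • (f (x + p.1) • fderiv ℝ (⇑g) (x + p.2) + g (x + p.2) • fderiv ℝ (⇑f) (x + p.1))
    with hF'_def
  have hDf : ∀ z, fderiv ℝ (⇑f) z = fderivCLM ℝ (Fin n → ℝ) ℂ f z := fun z => (fderivCLM_apply ℝ f z).symm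
  have hDg : ∀ z, fderiv ℝ (⇑g) z = fderivCLM ℝ (Fin n → ℝ) ℂ g z := fun z => (fderivCLM_apply ℝ g z).symm
  obtain ⟨Cf, hCf0, hCf⟩ := schwartz_decay_bound f u
  obtain ⟨Cg, hCg0, hCg⟩ := schwartz_decay_bound g u
  obtain ⟨CDf, hCDf0, hCDf⟩ := schwartz_decay_bound (fderivCLM ℝ (Fin n → ℝ) ℂ f) u
  obtain ⟨CDg, hCDg0, hCDg⟩ := schwartz_decay_bound (fderivCLM ℝ (Fin n → ℝ) ℂ g) u
  set bound : (Fin n → ℝ) × (Fin n → ℝ) → ℝ := fun p =>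
    (Cf * (((1:ℝ) + ‖p.1‖) ^ (n + 1))⁻¹) * (CDg * (((1:ℝ) + ‖p.2‖) ^ (n + 1))⁻¹) +
      (CDf * (((1:ℝ) + ‖p.1‖) ^ (n + 1))⁻¹) * (Cg * (((1:ℝ) + ‖p.2‖) ^ (n + 1))⁻¹)
    with hbound_def
  have hbound_int : Integrable bound := by
    rw [MeasureTheory.Measure.volume_eq_prod]
    exact (((integrable_jbracket n).const_mul Cf).mul_prod
      ((integrable_jbracket n).const_mul CDg)).add
      (((integrable_jbracket n).const_mul CDf).mul_prod
        ((integrable_jbracket n).const_mul Cg))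
  have hnorm : ∀ x ∈ ball u 1, ∀ p : (Fin n → ℝ) × (Fin n → ℝ), ‖F' x p‖ ≤ bound p := by
    intro x hx p
    rw [hF'_def]
    dsimp only
    refine le_trans (ContinuousLinearMap.opNorm_smul_le _ _) ?_
    rw [he p, one_mul]
    refine le_trans (norm_add_le _ _) ?_
    rw [hbound_def]
    dsimp only
    refine add_le_add (le_trans (ContinuousLinearMap.opNorm_smul_le _ _) ?_)
      (le_trans (ContinuousLinearMap.opNorm_smul_le _ _) ?_)
    · exact mul_le_mul (hCf x hx p.1) (by rw [hDg]; exact hCDg x hx p.2) (norm_nonneg _)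
        (by positivity)
    · refine le_trans (mul_le_mul (hCg x hx p.2) (by rw [hDf]; exact hCDf x hx p.1)
        (norm_nonneg _) (by positivity)) (le_of_eq (mul_comm _ _))
  have hF'_cont : ∀ x, Continuous (F' x) := by
    intro x
    rw [hF'_def]
    apply he_cont.smul
    apply Continuous.add
    · exact (f.continuous.comp (continuous_const.add continuous_fst)).smul
        (by simp only [hDg]
            exact (fderivCLM ℝ (Fin n → ℝ) ℂ g).continuous.comp (continuous_const.add continuous_snd))
    · exact (g.continuous.comp (continuous_const.add continuous_snd)).smul
        (by simp only [hDf]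
            exact (fderivCLM ℝ (Fin n → ℝ) ℂ f).continuous.comp (continuous_const.add continuous_fst))
  have hF'_int : Integrable (F' u) :=
    hbound_int.mono' (hF'_cont u).aestronglyMeasurable
      (Filter.Eventually.of_forall fun p => hnorm u (mem_ball_self one_pos) p)
  refine ⟨?_, hF'_int⟩
  apply hasFDerivAt_integral_of_dominated_of_fderiv_le (F' := F') (bound := bound) (ball_mem_nhds u one_pos)
  · exact Filter.Eventually.of_forall fun x =>
      (integrable_kernel f g e he_cont (fun p => (he p).le) x).aestronglyMeasurable
  · exact integrable_kernel f g e he_cont (fun p => (he p).le) u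
  · exact (hF'_cont u).aestronglyMeasurable
  · exact Filter.Eventually.of_forall fun p x hx => hnorm x hx p
  · exact hbound_int
  · refine Filter.Eventually.of_forall fun p x hx => ?_
    have h1 : HasFDerivAt (fun y : Fin n → ℝ => y + p.1)
        (ContinuousLinearMap.id ℝ (Fin n → ℝ)) x := (hasFDerivAt_id x).add_const p.1
    have h2 : HasFDerivAt (fun y : Fin n → ℝ => y + p.2)
        (ContinuousLinearMap.id ℝ (Fin n → ℝ)) x := (hasFDerivAt_id x).add_const p.2
    have hfd : HasFDerivAt (fun y : Fin n → ℝ => f (y + p.1)) (fderiv ℝ (⇑f) (x + p.1)) x := by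
      simpa [Function.comp_def] using (f.differentiableAt.hasFDerivAt (x := x + p.1)).comp x h1
    have hgd : HasFDerivAt (fun y : Fin n → ℝ => g (y + p.2)) (fderiv ℝ (⇑g) (x + p.2)) x := by
      simpa [Function.comp_def] using (g.differentiableAt.hasFDerivAt (x := x + p.2)).comp x h2
    exact (hfd.mul hgd).mul_const (e p)

/-- The phase kernel of the Moyal product, as a function on the product space. -/
noncomputable def eKer (n : ℕ) (hbar : ℝ) (Θinv : Matrix (Fin n) (Fin n) ℝ) :
    (Fin n → ℝ) × (Fin n → ℝ) → ℂ := fun p =>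
  Complex.exp ((2 * Complex.I / (hbar : ℂ)) *
    ((∑ i, ∑ j, p.1 i * Θinv i j * p.2 j : ℝ) : ℂ))

private lemma eKer_norm (n : ℕ) (hbar : ℝ) (Θinv : Matrix (Fin n) (Fin n) ℝ) (p) :
    ‖eKer n hbar Θinv p‖ = 1 := by
  unfold eKer
  set r : ℝ := ∑ i, ∑ j, p.1 i * Θinv i j * p.2 j with hr
  have h : (2 * Complex.I / (hbar:ℂ)) * (r:ℂ) = ((2 * r / hbar : ℝ) : ℂ) * Complex.I := by
    push_cast; ring
  rw [h, Complex.norm_exp]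
  simp

private lemma eKer_cont (n : ℕ) (hbar : ℝ) (Θinv : Matrix (Fin n) (Fin n) ℝ) :
    Continuous (eKer n hbar Θinv) := by
  unfold eKer
  apply Complex.continuous_exp.comp
  apply Continuous.mul continuous_const
  apply Complex.continuous_ofReal.comp
  apply continuous_finset_sum
  intro i _
  apply continuous_finset_sum
  intro j _
  exact (((continuous_apply i).comp continuous_fst).mul continuous_const).mul
    ((continuous_apply j).comp continuous_snd)

private lemma moyal_eq {n : ℕ} (hbar : ℝ) (Θinv : Matrix (Fin n) (Fin n) ℝ)
    (f g : 𝓢((Fin n → ℝ), ℂ)) (x : Fin n → ℝ) :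
    moyal n hbar Θinv ⇑f ⇑g x = (((Real.pi * hbar) ^ n : ℝ) : ℂ)⁻¹ *
      ∫ p : (Fin n → ℝ) × (Fin n → ℝ), f (x + p.1) * g (x + p.2) * eKer n hbar Θinv p := by
  have hi : Integrable (Function.uncurry fun v w =>
      (f (x + v) : ℂ) * g (x + w) * eKer n hbar Θinv (v, w))
      ((volume : Measure (Fin n → ℝ)).prod volume) := by
    have := integrable_kernel f g _ (eKer_cont n hbar Θinv)
      (fun p => (eKer_norm n hbar Θinv p).le) x
    rwa [Measure.volume_eq_prod] at this
  unfold moyal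
  congr 1
  exact (MeasureTheory.integral_integral hi).trans (by rw [← Measure.volume_eq_prod])

end MoyalLeibnizAux

/-- The Moyal star product satisfies the Leibniz rule:
`∂ᵢ(f ⋆ g) = (∂ᵢ f) ⋆ g + f ⋆ (∂ᵢ g)`. -/
theorem moyal_leibniz (n : ℕ) (hbar : ℝ) (hhbar : 0 < hbar)
    (Θinv : Matrix (Fin n) (Fin n) ℝ) (hskew : Θinv.transpose = -Θinv)
    (hinv : IsUnit Θinv.det)
    (f g : 𝓢((Fin n → ℝ), ℂ)) (i : Fin n) (u : Fin n → ℝ) :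
    fderiv ℝ (moyal n hbar Θinv f g) u (Pi.single i 1) =
      moyal n hbar Θinv (fun x => fderiv ℝ f x (Pi.single i 1)) g u +
        moyal n hbar Θinv f (fun x => fderiv ℝ g x (Pi.single i 1)) u := by
  have he_cont := eKer_cont n hbar Θinv
  have he_norm := eKer_norm n hbar Θinv
  have he_le : ∀ p, ‖eKer n hbar Θinv p‖ ≤ 1 := fun p => (he_norm p).le
  set c : ℂ := (((Real.pi * hbar) ^ n : ℝ) : ℂ)⁻¹ with hc
  set fi : 𝓢((Fin n → ℝ), ℂ) := LineDeriv.lineDerivOp (Pi.single i 1 : Fin n → ℝ) f with hfi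
  set gi : 𝓢((Fin n → ℝ), ℂ) := LineDeriv.lineDerivOp (Pi.single i 1 : Fin n → ℝ) g with hgi
  have hfi_eq : (fun x => fderiv ℝ (⇑f) x (Pi.single i 1)) = ⇑fi :=
    funext fun x => (SchwartzMap.lineDerivOp_apply_eq_fderiv (Pi.single i 1) f x).symm
  have hgi_eq : (fun x => fderiv ℝ (⇑g) x (Pi.single i 1)) = ⇑gi :=
    funext fun x => (SchwartzMap.lineDerivOp_apply_eq_fderiv (Pi.single i 1) g x).symm
  obtain ⟨hder, hint⟩ := moyal_key f g _ he_cont he_norm u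
  have hfun : moyal n hbar Θinv ⇑f ⇑g = fun x =>
      c * ∫ p : (Fin n → ℝ) × (Fin n → ℝ), f (x + p.1) * g (x + p.2) * eKer n hbar Θinv p :=
    funext fun x => moyal_eq hbar Θinv f g x
  have hM : HasFDerivAt (moyal n hbar Θinv ⇑f ⇑g)
      (c • ∫ p : (Fin n → ℝ) × (Fin n → ℝ),
        eKer n hbar Θinv p • (f (u + p.1) • fderiv ℝ (⇑g) (u + p.2) +
          g (u + p.2) • fderiv ℝ (⇑f) (u + p.1))) u := by
    rw [hfun]; exact hder.const_mul c
  rw [hM.fderiv, ContinuousLinearMap.smul_apply, ContinuousLinearMap.integral_apply hint,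
    hfi_eq, hgi_eq, moyal_eq hbar Θinv fi g u, moyal_eq hbar Θinv f gi u, ← mul_add,
    smul_eq_mul]
  congr 1
  rw [← integral_add (integrable_kernel fi g _ he_cont he_le u)
    (integrable_kernel f gi _ he_cont he_le u)]
  refine integral_congr_ae (Filter.Eventually.of_forall fun p => ?_)
  simp only [ContinuousLinearMap.add_apply, ContinuousLinearMap.coe_smul',
    ContinuousLinearMap.smul_apply, Pi.smul_apply, smul_eq_mul, hfi, hgi, SchwartzMap.lineDerivOp_apply_eq_fderiv]
  ring
end

section
/- For bounded operators A on a Hilbert space and D self-adjoint with e^{-tD²} trace class, the commutator identity [e^{-tD²}, A] = −t ∫₀¹ e^{-tsD²} [D², A] e^{-t(1-s)D²} ds holds whenever [D²,A] extends to a bounded operator. -/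
open MeasureTheory NormedSpace

/-- Duhamel formula in a Banach algebra over ℝ:
`exp C * A - A * exp C = ∫₀¹ exp(sC) [C, A] exp((1-s)C) ds`. -/
theorem duhamel_key {𝔸 : Type*} [NormedRing 𝔸] [NormedAlgebra ℝ 𝔸] [CompleteSpace 𝔸]
    (C A : 𝔸) :
    exp C * A - A * exp C =
      ∫ s in (0:ℝ)..1, exp (s • C) * (C * A - A * C) * exp ((1 - s) • C) := by
  have hcomm : ∀ r : ℝ, C * exp (r • C) = exp (r • C) * C := fun r =>
    (((Commute.refl C).smul_right r).exp_right).eq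
  set f : ℝ → 𝔸 := fun s => exp (s • C) * (A * exp ((1 - s) • C)) with hf
  have hderiv : ∀ s : ℝ,
      HasDerivAt f (exp (s • C) * (C * A - A * C) * exp ((1 - s) • C)) s := by
    intro s
    have hu : HasDerivAt (fun u : ℝ => exp (u • C)) (exp (s • C) * C) s :=
      hasDerivAt_exp_smul_const C s
    have hw : HasDerivAt (fun u : ℝ => 1 - u) (-1 : ℝ) s := by
      simpa using (hasDerivAt_id s).const_sub 1
    have hv : HasDerivAt (fun u : ℝ => exp ((1 - u) • C))
        ((-1 : ℝ) • (exp ((1 - s) • C) * C)) s :=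
      (hasDerivAt_exp_smul_const C (1 - s)).scomp s hw
    have hAv : HasDerivAt (fun u : ℝ => A * exp ((1 - u) • C))
        (A * ((-1 : ℝ) • (exp ((1 - s) • C) * C))) s := hv.const_mul A
    have := hu.mul hAv
    convert this using 1
    · rfl
    simp only [neg_one_smul, mul_neg]
    rw [← hcomm (1 - s)]
    noncomm_ring
  have hcont : Continuous fun s : ℝ =>
      exp (s • C) * (C * A - A * C) * exp ((1 - s) • C) := by
    letI : NormedAlgebra ℚ 𝔸 := NormedAlgebra.restrictScalars ℚ ℝ 𝔸
    have h1 : Continuous fun s : ℝ => exp (s • C) :=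
      exp_continuous.comp (continuous_id.smul continuous_const)
    have h2 : Continuous fun s : ℝ => exp ((1 - s) • C) :=
      exp_continuous.comp ((continuous_const.sub continuous_id).smul continuous_const)
    exact (h1.mul continuous_const).mul h2
  have hFTC := intervalIntegral.integral_eq_sub_of_hasDerivAt
    (f := f) (a := (0:ℝ)) (b := 1)
    (fun s _ => hderiv s) (hcont.intervalIntegrable 0 1)
  rw [hFTC, hf]
  simp [exp_zero]

set_option synthInstance.maxHeartbeats 400000 in
/-- For a bounded operator `A` on a Hilbert space and `D` self-adjoint, the commutator
identity `[e^{-tD²}, A] = −t ∫₀¹ e^{-tsD²} [D², A] e^{-t(1-s)D²} ds` holds. -/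
theorem heat_commutator_identity {H : Type*} [NormedAddCommGroup H] [InnerProductSpace ℂ H]
    [CompleteSpace H] (D A : H →L[ℂ] H) (hD : IsSelfAdjoint D) (t : ℝ) (ht : 0 ≤ t) :
    NormedSpace.exp ((-t) • D ^ 2) * A - A * NormedSpace.exp ((-t) • D ^ 2) =
      (-t) • ∫ s in (0:ℝ)..1,
        NormedSpace.exp ((-(t * s)) • D ^ 2) * (D ^ 2 * A - A * D ^ 2) *
          NormedSpace.exp ((-(t * (1 - s))) • D ^ 2) := by
  have key := duhamel_key ((-t) • D ^ 2) A
  rw [key]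
  have heq : ∀ s : ℝ,
      exp (s • ((-t) • D ^ 2)) * (((-t) • D ^ 2) * A - A * ((-t) • D ^ 2)) *
          exp ((1 - s) • ((-t) • D ^ 2)) =
        (-t) • (exp ((-(t * s)) • D ^ 2) * (D ^ 2 * A - A * D ^ 2) *
          exp ((-(t * (1 - s))) • D ^ 2)) := by
    intro s
    have e1 : s • ((-t) • D ^ 2) = (-(t * s)) • D ^ 2 := by
      rw [smul_smul]; ring_nf
    have e2 : (1 - s) • ((-t) • D ^ 2) = (-(t * (1 - s))) • D ^ 2 := by
      rw [smul_smul]; ring_nf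
    rw [e1, e2, smul_mul_assoc, mul_smul_comm, ← smul_sub, mul_smul_comm, smul_mul_assoc]
  rw [intervalIntegral.integral_congr (fun s _ => heq s), intervalIntegral.integral_smul]
end
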